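/- Suppose the family of distributions P(o, κ | i) over outcome assignments o and strict partial orders κ on Γ satisfies the free choice and closed laboratories assumptions. Define, for each SPO ξ on the set of parties Δ, P(o, ξ | i) := Σ_{κ : 𝒞_κ = ξ} P(o, κ | i). Then the marginal correlation P(o | i) := Σ_κ P(o, κ | i) is a causal correlation, witnessed by the distribution P(o, ξ | i): that is, Σ_ξ P(o, ξ | i) = P(o | i), and for every party X, every subset 𝒳 ⊆ Δ \ {X}, and every SPO ξ₀ on {X} ∪ 𝒳, the probability obtained by summing P(o, ξ | i) over all ξ in which no element of 𝒳 lies in the causal future of X and whose restriction to {X} ∪ 𝒳 equals ξ₀, and marginalising the outcomes of all parties outside 𝒳, does not depend on the value of i_X. -/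

import Mathlib

open Finset

/-- The variables associated to the parties: for a party `X`, `(X,0)` is `X_I`, `(X,1)` is
`X_O`, `(X,2)` is the setting variable `I_X` and `(X,3)` is the outcome variable `O_X`. -/
abbrev PVar (Δ : Type) := Δ × Fin 4

def XIv {Δ : Type} (X : Δ) : PVar Δ := (X, 0)
def XOv {Δ : Type} (X : Δ) : PVar Δ := (X, 1)
def IVv {Δ : Type} (X : Δ) : PVar Δ := (X, 2)
def OVv {Δ : Type} (X : Δ) : PVar Δ := (X, 3)

/-- Relations on the set `Γ` of variables, given as `Bool`-valued functions so that the
collection of all of them forms a finite type over which probabilities can be summed. -/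
abbrev CRel (Δ : Type) := PVar Δ → PVar Δ → Bool

/-- `κ` is a strict partial order (irreflexive and transitive). -/
def IsSPO {Δ : Type} (κ : CRel Δ) : Prop :=
  (∀ a, κ a a = false) ∧ ∀ a b c, κ a b = true → κ b c = true → κ a c = true

/-- `r` is a strict partial order on the subset `S`. -/
def IsSPOOn {Δ : Type} (r : CRel Δ) (S : Finset (PVar Δ)) : Prop :=
  (∀ a ∈ S, r a a = false) ∧
  ∀ a ∈ S, ∀ b ∈ S, ∀ c ∈ S, r a b = true → r b c = true → r a c = true

/-- The causal past `𝒫_v` of a variable `v` w.r.t. `κ`. -/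
def pastSet {Δ : Type} [Fintype Δ] [DecidableEq Δ] (κ : CRel Δ) (v : PVar Δ) :
    Finset (PVar Δ) :=
  Finset.univ.filter (fun Y => κ Y v = true)

/-- The causal elsewhere `ℰ_v` of a variable `v` w.r.t. `κ`. -/
def elseSet {Δ : Type} [Fintype Δ] [DecidableEq Δ] (κ : CRel Δ) (v : PVar Δ) :
    Finset (PVar Δ) :=
  Finset.univ.filter (fun Y => Y ≠ v ∧ κ Y v = false ∧ κ v Y = false)

/-- The marginal probability entering the free choice assumption for party `X`: the
probability that the causal past of `I_X` is `𝒴`, its causal elsewhere is `𝒵`, the causal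
order restricted to `𝒴 ∪ 𝒵` is `κ₀`, and the outcome variables lying in `𝒴 ∪ 𝒵` take the
values specified by `o` (all other outcome variables being marginalised). -/
noncomputable def margFC {Δ : Type} [Fintype Δ] [DecidableEq Δ]
    {ISet OSet : Δ → Type} [∀ X, Fintype (OSet X)] [∀ X, DecidableEq (OSet X)]
    (P : (∀ X, ISet X) → (∀ X, OSet X) → CRel Δ → ℝ)
    (i : ∀ X, ISet X) (X : Δ) (𝒴 𝒵 : Finset (PVar Δ)) (κ₀ : CRel Δ)
    (o : ∀ X', OSet X') : ℝ :=
  ∑ o' ∈ Finset.univ.filter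
      (fun o' : ∀ X', OSet X' => ∀ X', OVv X' ∈ 𝒴 ∪ 𝒵 → o' X' = o X'),
    ∑ κ ∈ Finset.univ.filter (fun κ : CRel Δ =>
        pastSet κ (IVv X) = 𝒴 ∧ elseSet κ (IVv X) = 𝒵 ∧
        ∀ a ∈ 𝒴 ∪ 𝒵, ∀ b ∈ 𝒴 ∪ 𝒵, κ a b = κ₀ a b),
      P i o' κ

/-- Free choice: for every party `X`, all disjoint subsets `𝒴, 𝒵 ⊆ Γ \ {I_X}`, every SPO
`κ₀` on `𝒴 ∪ 𝒵` and all outcome values of the parties whose outcome variable lies in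
`𝒴 ∪ 𝒵`, the marginal probability `margFC` does not depend on the value of `i_X`. -/
def FreeChoice {Δ : Type} [Fintype Δ] [DecidableEq Δ]
    {ISet OSet : Δ → Type} [∀ X, Fintype (OSet X)] [∀ X, DecidableEq (OSet X)]
    (P : (∀ X, ISet X) → (∀ X, OSet X) → CRel Δ → ℝ) : Prop :=
  ∀ (X : Δ) (𝒴 𝒵 : Finset (PVar Δ)),
    IVv X ∉ 𝒴 → IVv X ∉ 𝒵 → Disjoint 𝒴 𝒵 →
    ∀ κ₀ : CRel Δ, IsSPOOn κ₀ (𝒴 ∪ 𝒵) →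
    ∀ (o : ∀ X', OSet X') (i i' : ∀ X', ISet X'),
      (∀ X', X' ≠ X → i X' = i' X') →
      margFC P i X 𝒴 𝒵 κ₀ o = margFC P i' X 𝒴 𝒵 κ₀ o

/-- The closed-laboratory structural conditions on the causal order. -/
def ClosedLabStruct {Δ : Type} (κ : CRel Δ) : Prop :=
  ∀ (X : Δ) (Y : PVar Δ),
    (κ (IVv X) Y = true ↔ (Y = OVv X ∨ Y = XOv X ∨ κ (XOv X) Y = true)) ∧
    (κ Y (OVv X) = true ↔ (Y = IVv X ∨ Y = XIv X ∨ κ Y (XIv X) = true))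

/-- Closed laboratories: positive-probability causal orders satisfy the structural
conditions, and for each party `X` there is a setting value `i_X*` for which
`X_I ≺ X_O` holds with certainty. -/
def ClosedLab {Δ : Type} {ISet OSet : Δ → Type}
    (P : (∀ X, ISet X) → (∀ X, OSet X) → CRel Δ → ℝ) : Prop :=
  (∀ i o κ, 0 < P i o κ → ClosedLabStruct κ) ∧
  ∀ X : Δ, ∃ istar : ISet X,
    ∀ i o κ, i X = istar → 0 < P i o κ → κ (XIv X) (XOv X) = true

/-- The coarse-grained relation `𝒞_κ` on the parties: `X 𝒞_κ Y` iff there is a chain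
`X_O ≺ Λ^{(1)}_I`, `Λ^{(j)}_O ≺ Λ^{(j+1)}_I`, …, `Λ^{(M)}_O ≺ Y_I` (with `M ≥ 0`). -/
def coarse {Δ : Type} (κ : CRel Δ) : Δ → Δ → Prop :=
  Relation.TransGen (fun W V => κ (XOv W) (XIv V) = true)

open scoped Classical

/-- The probability, computed from the coarse-grained distribution
`P(o, ξ | i) = Σ_{κ : 𝒞_κ = ξ} P(o, κ | i)`, that no element of `𝒳` lies in the causal
future of the party `X`, that the coarse-grained causal order restricted to `{X} ∪ 𝒳`
equals `ξ₀`, and that the parties in `𝒳` display the outcomes specified by `o` (all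
other outcomes being marginalised). -/
noncomputable def margCausal {Δ : Type} [Fintype Δ] [DecidableEq Δ]
    {ISet OSet : Δ → Type} [∀ X, Fintype (OSet X)] [∀ X, DecidableEq (OSet X)]
    (P : (∀ X, ISet X) → (∀ X, OSet X) → CRel Δ → ℝ)
    (i : ∀ X, ISet X) (o : ∀ X, OSet X) (X : Δ) (𝒳 : Finset Δ)
    (ξ₀ : Δ → Δ → Bool) : ℝ :=
  ∑ o' ∈ Finset.univ.filter (fun o' : ∀ X', OSet X' => ∀ W ∈ 𝒳, o' W = o W),
    ∑ ξ ∈ Finset.univ.filter (fun ξ : Δ → Δ → Bool =>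
        (∀ W ∈ 𝒳, ξ X W = false) ∧
        ∀ a ∈ insert X 𝒳, ∀ b ∈ insert X 𝒳, ξ a b = ξ₀ a b),
      ∑ κ ∈ Finset.univ.filter
          (fun κ : CRel Δ => ∀ Y Z : Δ, (coarse κ Y Z ↔ ξ Y Z = true)),
        P i o' κ

section AuxStruct

variable {Δ : Type}

lemma fin_snd_ne {a b : Δ} {x y : Fin 4} (h : x ≠ y) : (⟨a, x⟩ : PVar Δ) ≠ ⟨b, y⟩ :=
  fun he => h (congrArg Prod.snd he)

/-- `κ` is good: an SPO satisfying the closed-lab structural conditions. -/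
def GoodK (κ : CRel Δ) : Prop := IsSPO κ ∧ ClosedLabStruct κ

lemma GoodK.tr {κ : CRel Δ} (h : GoodK κ) {a b c : PVar Δ}
    (hab : κ a b = true) (hbc : κ b c = true) : κ a c = true := h.1.2 a b c hab hbc

lemma good_IXO {κ : CRel Δ} (h : GoodK κ) (X : Δ) : κ (IVv X) (XOv X) = true :=
  ((h.2 X (XOv X)).1).mpr (Or.inr (Or.inl rfl))

lemma good_IXI_iff {κ : CRel Δ} (h : GoodK κ) (X W : Δ) :
    κ (IVv X) (XIv W) = true ↔ κ (XOv X) (XIv W) = true := by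
  rw [(h.2 X (XIv W)).1]
  constructor
  · rintro (h1 | h1 | h1)
    · exact absurd h1 (fin_snd_ne (by decide))
    · exact absurd h1 (fin_snd_ne (by decide))
    · exact h1
  · exact fun h1 => Or.inr (Or.inr h1)

lemma good_IOW_iff {κ : CRel Δ} (h : GoodK κ) {X W : Δ} (hWX : W ≠ X) :
    κ (IVv X) (OVv W) = true ↔ κ (XOv X) (XIv W) = true := by
  rw [(h.2 X (OVv W)).1]
  constructor
  · rintro (h1 | h1 | h1)
    · exact absurd (congrArg Prod.fst h1) hWX
    · exact absurd h1 (fin_snd_ne (by decide))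
    · rw [(h.2 W (XOv X)).2] at h1
      rcases h1 with h1 | h1 | h1
      · exact absurd h1 (fin_snd_ne (by decide))
      · exact absurd h1 (fin_snd_ne (by decide))
      · exact h1
  · intro h1
    refine Or.inr (Or.inr ?_)
    rw [(h.2 W (XOv X)).2]
    exact Or.inr (Or.inr h1)

lemma coarse_of_IXI {κ : CRel Δ} (h : GoodK κ) {X W : Δ}
    (hx : κ (IVv X) (XIv W) = true) : coarse κ X W :=
  Relation.TransGen.single ((good_IXI_iff h X W).mp hx)

lemma NFmid {κ : CRel Δ} (h : GoodK κ) {X c b : Δ} (hnb : ¬ coarse κ X b)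
    (hcb : coarse κ c b) : κ (IVv X) (XIv c) = false := by
  cases hcc : κ (IVv X) (XIv c) with
  | false => rfl
  | true => exact absurd (Relation.TransGen.trans (coarse_of_IXI h hcc) hcb) hnb

lemma coarse_back {κ κ' : CRel Δ} (hκ : GoodK κ) (hκ' : GoodK κ') {X : Δ}
    (hF : ∀ Y, κ (IVv X) Y = κ' (IVv X) Y)
    (hAg : ∀ a b, a ≠ IVv X → b ≠ IVv X → κ (IVv X) a = false → κ (IVv X) b = false →
      κ a b = κ' a b)
    {b : Δ} (h : coarse κ' X b) : coarse κ X b := by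
  unfold coarse at h ⊢
  induction h with
  | @single c h1 =>
    have h2 : κ (IVv X) (XIv c) = true := by
      rw [hF]; exact hκ'.tr (good_IXO hκ' X) h1
    exact Relation.TransGen.single ((good_IXI_iff hκ X _).mp h2)
  | @tail c b hc h1 ih =>
    cases hbI : κ (IVv X) (XIv b) with
    | true => exact Relation.TransGen.single ((good_IXI_iff hκ X b).mp hbI)
    | false =>
      have hcO : κ (IVv X) (XOv c) = false := by
        cases hcc : κ (IVv X) (XOv c) with
        | false => rfl
        | true =>
          have h3 : κ' (IVv X) (XIv b) = true := hκ'.tr (by rw [← hF]; exact hcc) h1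
          rw [← hF, hbI] at h3
          exact absurd h3 (by decide)
      have hstep : κ (XOv c) (XIv b) = true := by
        rw [hAg (XOv c) (XIv b) (fin_snd_ne (by decide)) (fin_snd_ne (by decide)) hcO hbI]
        exact h1
      exact ih.tail hstep

lemma coarse_fwd {κ κ' : CRel Δ} (hκ : GoodK κ) (hκ' : GoodK κ') {X : Δ}
    (hF : ∀ Y, κ (IVv X) Y = κ' (IVv X) Y)
    (hAg : ∀ a b, a ≠ IVv X → b ≠ IVv X → κ (IVv X) a = false → κ (IVv X) b = false →
      κ a b = κ' a b)
    {a b : Δ} (hnb : ¬ coarse κ X b) (h : coarse κ a b) : coarse κ' a b := by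
  unfold coarse at h ⊢
  induction h using Relation.TransGen.head_induction_on with
  | single h1 =>
    rename_i a'
    have hbNF : κ (IVv X) (XIv b) = false := by
      cases hh : κ (IVv X) (XIv b) with
      | false => rfl
      | true => exact absurd (coarse_of_IXI hκ hh) hnb
    have haNF : κ (IVv X) (XOv a') = false := by
      cases hh : κ (IVv X) (XOv a') with
      | false => rfl
      | true =>
        have h2 := hκ.tr hh h1
        rw [hbNF] at h2
        exact absurd h2 (by decide)
    have hstep : κ' (XOv a') (XIv b) = true := by
      rw [← hAg (XOv a') (XIv b) (fin_snd_ne (by decide)) (fin_snd_ne (by decide)) haNF hbNF]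
      exact h1
    exact Relation.TransGen.single hstep
  | head h1 hrest ihh =>
    rename_i a' c
    have hcNF : κ (IVv X) (XIv c) = false := NFmid hκ hnb hrest
    have haNF : κ (IVv X) (XOv a') = false := by
      cases hh : κ (IVv X) (XOv a') with
      | false => rfl
      | true =>
        have h2 := hκ.tr hh h1
        rw [hcNF] at h2
        exact absurd h2 (by decide)
    have hstep : κ' (XOv a') (XIv c) = true := by
      rw [← hAg (XOv a') (XIv c) (fin_snd_ne (by decide)) (fin_snd_ne (by decide)) haNF hcNF]
      exact h1
    exact Relation.TransGen.head hstep ihh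

end AuxStruct
section AuxCell

variable {Δ : Type} [DecidableEq Δ]

/-- The condition on `κ` appearing (via the coarse-grained order) in `margCausal`. -/
def condP (X : Δ) (𝒳 : Finset Δ) (ξ₀ : Δ → Δ → Bool) (κ : CRel Δ) : Prop :=
  (∀ W ∈ 𝒳, ¬ coarse κ X W) ∧
  ∀ a ∈ insert X 𝒳, ∀ b ∈ insert X 𝒳, (coarse κ a b ↔ ξ₀ a b = true)

lemma condP_transfer {κ κ' : CRel Δ} (hκ : GoodK κ) (hκ' : GoodK κ')
    (X : Δ) (𝒳 : Finset Δ) (ξ₀ : Δ → Δ → Bool) (hξXX : ξ₀ X X = false)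
    (hF : ∀ Y, κ (IVv X) Y = κ' (IVv X) Y)
    (hAg : ∀ a b, a ≠ IVv X → b ≠ IVv X → κ (IVv X) a = false → κ (IVv X) b = false →
      κ a b = κ' a b)
    (h : condP X 𝒳 ξ₀ κ) : condP X 𝒳 ξ₀ κ' := by
  have hF' : ∀ Y, κ' (IVv X) Y = κ (IVv X) Y := fun Y => (hF Y).symm
  have hAg' : ∀ a b, a ≠ IVv X → b ≠ IVv X → κ' (IVv X) a = false → κ' (IVv X) b = false →
      κ' a b = κ a b := by
    intro a b ha hb h1 h2
    exact (hAg a b ha hb (by rw [hF]; exact h1) (by rw [hF]; exact h2)).symm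
  have hNoFut : ∀ b ∈ insert X 𝒳, ¬ coarse κ X b := by
    intro b hb
    rcases Finset.mem_insert.mp hb with rfl | hb'
    · intro hc
      have h2 := (h.2 b (Finset.mem_insert_self b 𝒳) b (Finset.mem_insert_self b 𝒳)).mp hc
      rw [hξXX] at h2
      exact absurd h2 (by decide)
    · exact h.1 b hb'
  have hNoFut' : ∀ b ∈ insert X 𝒳, ¬ coarse κ' X b :=
    fun b hb hc => hNoFut b hb (coarse_back hκ hκ' hF hAg hc)
  refine ⟨fun W hW => hNoFut' W (Finset.mem_insert_of_mem hW), ?_⟩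
  intro a ha b hb
  rw [← h.2 a ha b hb]
  constructor
  · intro hc; exact coarse_fwd hκ' hκ hF' hAg' (hNoFut' b hb) hc
  · intro hc; exact coarse_fwd hκ hκ' hF hAg (hNoFut b hb) hc

variable [Fintype Δ]

lemma mem_NF_iff {κ : CRel Δ} (hκ : GoodK κ) (X : Δ) (Y : PVar Δ) :
    Y ∈ pastSet κ (IVv X) ∪ elseSet κ (IVv X) ↔ Y ≠ IVv X ∧ κ (IVv X) Y = false := by
  simp only [pastSet, elseSet, Finset.mem_union, Finset.mem_filter, Finset.mem_univ, true_and]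
  constructor
  · rintro (h1 | ⟨h1, h2, h3⟩)
    · refine ⟨fun he => ?_, ?_⟩
      · rw [he, hκ.1.1] at h1; exact absurd h1 (by decide)
      · cases h2 : κ (IVv X) Y with
        | false => rfl
        | true =>
          have h3 := hκ.tr h2 h1
          rw [hκ.1.1] at h3; exact absurd h3 (by decide)
    · exact ⟨h1, h3⟩
  · rintro ⟨h1, h2⟩
    cases h3 : κ Y (IVv X) with
    | true => exact Or.inl rfl
    | false => exact Or.inr ⟨h1, rfl, h2⟩

/-- The "non-future of `I_X`" variables. -/
def NFset (X : Δ) (κ : CRel Δ) : Finset (PVar Δ) :=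
  pastSet κ (IVv X) ∪ elseSet κ (IVv X)

/-- The canonical (masked) restriction of `κ` to `NFset`. -/
def maskC (X : Δ) (κ : CRel Δ) : CRel Δ :=
  fun a b => if a ∈ NFset X κ ∧ b ∈ NFset X κ then κ a b else false

abbrev Cell (Δ : Type) := Finset (PVar Δ) × Finset (PVar Δ) × CRel Δ

def PhiC (X : Δ) (κ : CRel Δ) : Cell Δ :=
  (pastSet κ (IVv X), elseSet κ (IVv X), maskC X κ)

/-- Membership of `κ` in the cell `c`, matching the filter in `margFC`. -/
def cellMem (X : Δ) (c : Cell Δ) (κ : CRel Δ) : Prop :=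
  pastSet κ (IVv X) = c.1 ∧ elseSet κ (IVv X) = c.2.1 ∧
    ∀ a ∈ c.1 ∪ c.2.1, ∀ b ∈ c.1 ∪ c.2.1, κ a b = c.2.2 a b

def goodCell (X : Δ) (𝒳 : Finset Δ) (ξ₀ : Δ → Δ → Bool) (c : Cell Δ) : Prop :=
  ∃ κ, GoodK κ ∧ condP X 𝒳 ξ₀ κ ∧ c = PhiC X κ

lemma cellMem_self (X : Δ) (κ : CRel Δ) : cellMem X (PhiC X κ) κ :=
  ⟨rfl, rfl, fun a ha b hb => (if_pos ⟨ha, hb⟩).symm⟩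

lemma cell_eq_PhiC {X : Δ} {κ κh : CRel Δ} (hcm : cellMem X (PhiC X κh) κ) :
    PhiC X κh = PhiC X κ := by
  obtain ⟨hp, he, hr⟩ := hcm
  simp only [PhiC] at hp he hr ⊢
  refine Prod.ext hp.symm (Prod.ext he.symm ?_)
  funext a b
  show maskC X κh a b = maskC X κ a b
  have hNF : NFset X κh = NFset X κ := by
    unfold NFset; rw [hp, he]
  by_cases hm : a ∈ NFset X κh ∧ b ∈ NFset X κh
  · rw [maskC, maskC, if_pos hm, if_pos (by rw [← hNF]; exact hm)]
    rw [hr a hm.1 b hm.2, maskC, if_pos hm]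
  · rw [maskC, maskC, if_neg hm, if_neg (by rw [← hNF]; exact hm)]

lemma cellMem_F_eq {X : Δ} {κ κh : CRel Δ} (hκ : GoodK κ) (hκh : GoodK κh)
    (hcm : cellMem X (PhiC X κh) κ) : ∀ Y, κh (IVv X) Y = κ (IVv X) Y := by
  obtain ⟨hp, he, _⟩ := hcm
  simp only [PhiC] at hp he
  intro Y
  by_cases hY : Y = IVv X
  · rw [hY, hκ.1.1, hκh.1.1]
  · have hiff : (Y ≠ IVv X ∧ κ (IVv X) Y = false) ↔ (Y ≠ IVv X ∧ κh (IVv X) Y = false) := by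
      rw [← mem_NF_iff hκ X Y, ← mem_NF_iff hκh X Y, hp, he]
    cases h1 : κh (IVv X) Y with
    | false =>
      rcases hiff.mpr ⟨hY, h1⟩ with ⟨_, h2⟩
      rw [h2]
    | true =>
      cases h2 : κ (IVv X) Y with
      | true => rfl
      | false =>
        rcases hiff.mp ⟨hY, h2⟩ with ⟨_, h3⟩
        rw [h1] at h3; exact absurd h3 (by decide)

lemma cellMem_Ag {X : Δ} {κ κh : CRel Δ} (hκ : GoodK κ) (hκh : GoodK κh)
    (hcm : cellMem X (PhiC X κh) κ) :
    ∀ a b, a ≠ IVv X → b ≠ IVv X → κh (IVv X) a = false → κh (IVv X) b = false →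
      κh a b = κ a b := by
  obtain ⟨hp, he, hr⟩ := hcm
  simp only [PhiC] at hp he hr
  intro a b ha hb h1 h2
  have haM : a ∈ NFset X κh := (mem_NF_iff hκh X a).mpr ⟨ha, h1⟩
  have hbM : b ∈ NFset X κh := (mem_NF_iff hκh X b).mpr ⟨hb, h2⟩
  have h3 : κ a b = maskC X κh a b := hr a haM b hbM
  rw [h3, maskC, if_pos ⟨haM, hbM⟩]

lemma cellMem_condP {X : Δ} {𝒳 : Finset Δ} {ξ₀ : Δ → Δ → Bool} {κ κh : CRel Δ}
    (hκ : GoodK κ) (hκh : GoodK κh) (hξXX : ξ₀ X X = false)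
    (hcm : cellMem X (PhiC X κh) κ) (hc : condP X 𝒳 ξ₀ κh) : condP X 𝒳 ξ₀ κ :=
  condP_transfer hκh hκ X 𝒳 ξ₀ hξXX (cellMem_F_eq hκ hκh hcm) (cellMem_Ag hκ hκh hcm) hc

end AuxCell
section AuxSum

variable {Δ : Type} [Fintype Δ] [DecidableEq Δ]

lemma decide_eq_bool_iff (p : Prop) [Decidable p] (b : Bool) :
    (decide p = b) ↔ (p ↔ b = true) := by
  cases b <;> simp

lemma xi_collapse (Q : (Δ → Δ → Bool) → Prop) (f : CRel Δ → ℝ)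
    (sQ : Finset (Δ → Δ → Bool)) (hsQ : ∀ ξ, ξ ∈ sQ ↔ Q ξ)
    (sK : (Δ → Δ → Bool) → Finset (CRel Δ))
    (hsK : ∀ ξ κ, κ ∈ sK ξ ↔ ∀ Y Z : Δ, (coarse κ Y Z ↔ ξ Y Z = true))
    (sC : Finset (CRel Δ))
    (hsC : ∀ κ : CRel Δ, κ ∈ sC ↔ Q (fun Y Z => decide (coarse κ Y Z))) :
    (∑ ξ ∈ sQ, ∑ κ ∈ sK ξ, f κ) = ∑ κ ∈ sC, f κ := by
  classical
  have inner : ∀ ξ, (∑ κ ∈ sK ξ, f κ)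
      = ∑ κ : CRel Δ, if ξ = (fun Y Z => decide (coarse κ Y Z)) then f κ else 0 := by
    intro ξ
    have hiff : ∀ κ : CRel Δ,
        (ξ = (fun Y Z => decide (coarse κ Y Z))) ↔ ∀ Y Z : Δ, (coarse κ Y Z ↔ ξ Y Z = true) := by
      intro κ
      constructor
      · intro h Y Z
        rw [h]
        simp
      · intro h
        funext Y Z
        rw [Bool.eq_iff_iff, decide_eq_true_eq]
        exact (h Y Z).symm
    calc (∑ κ ∈ sK ξ, f κ)
        = ∑ κ ∈ Finset.univ.filter
            (fun κ : CRel Δ => ξ = (fun Y Z => decide (coarse κ Y Z))), f κ := by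
          refine Finset.sum_congr ?_ fun _ _ => rfl
          ext κ
          simp only [Finset.mem_filter, Finset.mem_univ, true_and, hsK, hiff]
      _ = ∑ κ : CRel Δ, if ξ = (fun Y Z => decide (coarse κ Y Z)) then f κ else 0 :=
          Finset.sum_filter _ _
  rw [Finset.sum_congr rfl (fun ξ _ => inner ξ), Finset.sum_comm]
  have outer : ∀ κ : CRel Δ,
      (∑ ξ ∈ sQ, if ξ = (fun Y Z => decide (coarse κ Y Z)) then f κ else 0)
      = if κ ∈ sC then f κ else 0 := by
    intro κ
    rw [Finset.sum_ite_eq' sQ (fun Y Z => decide (coarse κ Y Z)) (fun _ => f κ)]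
    refine if_congr ?_ rfl rfl
    rw [hsQ, hsC]
  rw [Finset.sum_congr rfl (fun κ _ => outer κ), Finset.sum_ite_mem, Finset.univ_inter]

lemma xi_total (f : CRel Δ → ℝ)
    (sK : (Δ → Δ → Bool) → Finset (CRel Δ))
    (hsK : ∀ ξ κ, κ ∈ sK ξ ↔ ∀ Y Z : Δ, (coarse κ Y Z ↔ ξ Y Z = true)) :
    (∑ ξ : Δ → Δ → Bool, ∑ κ ∈ sK ξ, f κ) = ∑ κ : CRel Δ, f κ := by
  classical
  exact xi_collapse (fun _ => True) f Finset.univ (by simp) sK hsK Finset.univ (by simp)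

lemma cell_decomp (f : CRel Δ → ℝ) (hf : ∀ κ, f κ ≠ 0 → GoodK κ)
    (X : Δ) (𝒳 : Finset Δ) (ξ₀ : Δ → Δ → Bool) (hξXX : ξ₀ X X = false) :
    (∑ κ ∈ Finset.univ.filter (condP X 𝒳 ξ₀), f κ)
      = ∑ c ∈ Finset.univ.filter (goodCell X 𝒳 ξ₀),
          ∑ κ ∈ Finset.univ.filter (cellMem X c), f κ := by
  classical
  have key : ∀ κ : CRel Δ,
      (if condP X 𝒳 ξ₀ κ then f κ else 0)
      = ∑ c ∈ Finset.univ.filter (goodCell X 𝒳 ξ₀),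
          if cellMem X c κ then f κ else 0 := by
    intro κ
    by_cases hf0 : f κ = 0
    · simp [hf0]
    have hκ : GoodK κ := hf κ hf0
    by_cases hc : condP X 𝒳 ξ₀ κ
    · rw [if_pos hc, Finset.sum_eq_single (PhiC X κ)]
      · rw [if_pos (cellMem_self X κ)]
      · intro c hcmem hne
        rw [if_neg]
        intro hcm
        obtain ⟨κh, hκh, hcondh, rfl⟩ := (Finset.mem_filter.mp hcmem).2
        exact hne (cell_eq_PhiC hcm)
      · intro h
        exact absurd (Finset.mem_filter.mpr ⟨Finset.mem_univ _, ⟨κ, hκ, hc, rfl⟩⟩) h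
    · rw [if_neg hc]
      symm
      apply Finset.sum_eq_zero
      intro c hcmem
      rw [if_neg]
      intro hcm
      obtain ⟨κh, hκh, hcondh, rfl⟩ := (Finset.mem_filter.mp hcmem).2
      exact hc (cellMem_condP hκ hκh hξXX hcm hcondh)
  calc (∑ κ ∈ Finset.univ.filter (condP X 𝒳 ξ₀), f κ)
      = ∑ κ : CRel Δ, if condP X 𝒳 ξ₀ κ then f κ else 0 := Finset.sum_filter _ _
    _ = ∑ κ : CRel Δ, ∑ c ∈ Finset.univ.filter (goodCell X 𝒳 ξ₀),
          if cellMem X c κ then f κ else 0 := Finset.sum_congr rfl fun κ _ => key κ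
    _ = ∑ c ∈ Finset.univ.filter (goodCell X 𝒳 ξ₀),
          ∑ κ : CRel Δ, if cellMem X c κ then f κ else 0 := Finset.sum_comm
    _ = ∑ c ∈ Finset.univ.filter (goodCell X 𝒳 ξ₀),
          ∑ κ ∈ Finset.univ.filter (cellMem X c), f κ :=
        Finset.sum_congr rfl fun c _ => (Finset.sum_filter _ _).symm

lemma goodCell_props {X : Δ} {𝒳 : Finset Δ} {ξ₀ : Δ → Δ → Bool} {c : Cell Δ}
    (hX𝒳 : X ∉ 𝒳) (hgc : goodCell X 𝒳 ξ₀ c) :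
    IVv X ∉ c.1 ∧ IVv X ∉ c.2.1 ∧ Disjoint c.1 c.2.1 ∧ IsSPOOn c.2.2 (c.1 ∪ c.2.1) ∧
      ∀ W ∈ 𝒳, OVv W ∈ c.1 ∪ c.2.1 := by
  obtain ⟨κ, hκ, hcond, rfl⟩ := hgc
  simp only [PhiC]
  refine ⟨?_, ?_, ?_, ⟨?_, ?_⟩, ?_⟩
  · simp [pastSet, hκ.1.1]
  · simp [elseSet]
  · rw [Finset.disjoint_left]
    intro a ha hb
    simp only [pastSet, Finset.mem_filter, Finset.mem_univ, true_and] at ha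
    simp only [elseSet, Finset.mem_filter, Finset.mem_univ, true_and] at hb
    rw [hb.2.1] at ha
    exact absurd ha (by decide)
  · intro a ha
    show maskC X κ a a = false
    rw [maskC, if_pos ⟨ha, ha⟩]
    exact hκ.1.1 a
  · intro a ha b hb c' hc' h1 h2
    show maskC X κ a c' = true
    have h1' : κ a b = true := by rw [maskC, if_pos ⟨ha, hb⟩] at h1; exact h1
    have h2' : κ b c' = true := by rw [maskC, if_pos ⟨hb, hc'⟩] at h2; exact h2
    rw [maskC, if_pos ⟨ha, hc'⟩]
    exact hκ.tr h1' h2'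
  · intro W hW
    have hWX : W ≠ X := fun h => hX𝒳 (h ▸ hW)
    have hfut : κ (IVv X) (OVv W) = false := by
      cases hh : κ (IVv X) (OVv W) with
      | false => rfl
      | true =>
        have : coarse κ X W := Relation.TransGen.single ((good_IOW_iff hκ hWX).mp hh)
        exact absurd this (hcond.1 W hW)
    exact (mem_NF_iff hκ X (OVv W)).mpr ⟨fin_snd_ne (by decide), hfut⟩

end AuxSum
section AuxFC

variable {Δ : Type} [Fintype Δ] [DecidableEq Δ]
variable {ISet OSet : Δ → Type}
variable [∀ X, Fintype (OSet X)] [∀ X, DecidableEq (OSet X)]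

lemma sum_cell_invariant
    (P : (∀ X, ISet X) → (∀ X, OSet X) → CRel Δ → ℝ) (hFC : FreeChoice P)
    (X : Δ) (𝒳 : Finset Δ) (c : Cell Δ)
    (hIY : IVv X ∉ c.1) (hIZ : IVv X ∉ c.2.1) (hdisj : Disjoint c.1 c.2.1)
    (hSPO : IsSPOOn c.2.2 (c.1 ∪ c.2.1))
    (hOsub : ∀ W ∈ 𝒳, OVv W ∈ c.1 ∪ c.2.1)
    (o : ∀ X', OSet X') (i i' : ∀ X', ISet X') (hii : ∀ W, W ≠ X → i W = i' W) :
    (∑ o' ∈ Finset.univ.filter (fun o' : ∀ X', OSet X' => ∀ W ∈ 𝒳, o' W = o W),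
      ∑ κ ∈ Finset.univ.filter (cellMem X c), P i o' κ)
    = ∑ o' ∈ Finset.univ.filter (fun o' : ∀ X', OSet X' => ∀ W ∈ 𝒳, o' W = o W),
      ∑ κ ∈ Finset.univ.filter (cellMem X c), P i' o' κ := by
  classical
  set S : Finset (PVar Δ) := c.1 ∪ c.2.1 with hS
  set r : (∀ X', OSet X') → (∀ X', Option (OSet X')) :=
    fun o' W => if OVv W ∈ S then some (o' W) else none with hr
  have hrag : ∀ o' o'' : ∀ X', OSet X',
      r o' = r o'' ↔ (∀ W, OVv W ∈ S → o' W = o'' W) := by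
    intro o' o''
    constructor
    · intro h W hW
      have h2 := congrFun h W
      simp only [hr] at h2
      rw [if_pos hW, if_pos hW] at h2
      exact Option.some.inj h2
    · intro h
      funext W
      simp only [hr]
      by_cases hW : OVv W ∈ S
      · rw [if_pos hW, if_pos hW, h W hW]
      · rw [if_neg hW, if_neg hW]
  set B := Finset.univ.filter (fun o' : ∀ X', OSet X' => ∀ W ∈ 𝒳, o' W = o W) with hB
  have fib : ∀ j : ∀ X', ISet X',
      (∑ o' ∈ B, ∑ κ ∈ Finset.univ.filter (cellMem X c), P j o' κ)
      = ∑ t ∈ B.image r, ∑ o' ∈ B.filter (fun o' => r o' = t),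
          ∑ κ ∈ Finset.univ.filter (cellMem X c), P j o' κ := by
    intro j
    exact (Finset.sum_fiberwise_of_maps_to (fun x hx => Finset.mem_image_of_mem r hx) _).symm
  rw [fib i, fib i']
  refine Finset.sum_congr rfl fun t ht => ?_
  obtain ⟨ob, hobB, hobt⟩ := Finset.mem_image.mp ht
  have hset : B.filter (fun o' => r o' = t)
      = Finset.univ.filter
          (fun o' : ∀ X', OSet X' => ∀ X'', OVv X'' ∈ c.1 ∪ c.2.1 → o' X'' = ob X'') := by
    ext o'
    simp only [Finset.mem_filter, Finset.mem_univ, true_and]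
    constructor
    · rintro ⟨h1, h2⟩
      exact fun W hW => (hrag o' ob).mp (h2.trans hobt.symm) W hW
    · intro h
      have hro : r o' = r ob := (hrag o' ob).mpr h
      have hoB : o' ∈ B := by
        simp only [hB, Finset.mem_filter, Finset.mem_univ, true_and] at hobB ⊢
        intro W hW
        rw [(hrag o' ob).mp hro W (hOsub W hW)]
        exact hobB W hW
      exact ⟨hoB, hro.trans hobt⟩
  rw [hset]
  have hmarg : ∀ j : ∀ X', ISet X',
      (∑ o' ∈ Finset.univ.filter
          (fun o' : ∀ X', OSet X' => ∀ X'', OVv X'' ∈ c.1 ∪ c.2.1 → o' X'' = ob X''),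
        ∑ κ ∈ Finset.univ.filter (cellMem X c), P j o' κ)
      = margFC P j X c.1 c.2.1 c.2.2 ob := by
    intro j
    unfold margFC
    refine Finset.sum_congr (Finset.filter_congr fun o' _ => Iff.rfl) fun o' _ => ?_
    exact Finset.sum_congr (Finset.filter_congr fun κ _ => Iff.rfl) fun κ _ => rfl
  rw [hmarg i, hmarg i']
  exact hFC X c.1 c.2.1 hIY hIZ hdisj c.2.2 hSPO ob i i' hii

end AuxFC
section AuxMain

variable {Δ : Type} [Fintype Δ] [DecidableEq Δ]
variable {ISet OSet : Δ → Type}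
variable [∀ X, Fintype (OSet X)] [∀ X, DecidableEq (OSet X)]

lemma margCausal_eq
    (P : (∀ X, ISet X) → (∀ X, OSet X) → CRel Δ → ℝ)
    (hGood : ∀ i o κ, P i o κ ≠ 0 → GoodK κ)
    (i : ∀ X, ISet X) (o : ∀ X, OSet X) (X : Δ) (𝒳 : Finset Δ)
    (ξ₀ : Δ → Δ → Bool) (hξXX : ξ₀ X X = false) :
    margCausal P i o X 𝒳 ξ₀
      = ∑ c ∈ Finset.univ.filter (goodCell X 𝒳 ξ₀),
          ∑ o' ∈ Finset.univ.filter (fun o' : ∀ X', OSet X' => ∀ W ∈ 𝒳, o' W = o W),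
            ∑ κ ∈ Finset.univ.filter (cellMem X c), P i o' κ := by
  classical
  unfold margCausal
  refine Eq.trans (Finset.sum_congr rfl fun o' _ => ?_) Finset.sum_comm
  have h1 : (∑ ξ ∈ Finset.univ.filter (fun ξ : Δ → Δ → Bool =>
        (∀ W ∈ 𝒳, ξ X W = false) ∧
        ∀ a ∈ insert X 𝒳, ∀ b ∈ insert X 𝒳, ξ a b = ξ₀ a b),
      ∑ κ ∈ Finset.univ.filter
          (fun κ : CRel Δ => ∀ Y Z : Δ, (coarse κ Y Z ↔ ξ Y Z = true)),
        P i o' κ)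
      = ∑ κ ∈ Finset.univ.filter (condP X 𝒳 ξ₀), P i o' κ := by
    refine xi_collapse (fun ξ : Δ → Δ → Bool =>
        (∀ W ∈ 𝒳, ξ X W = false) ∧
        ∀ a ∈ insert X 𝒳, ∀ b ∈ insert X 𝒳, ξ a b = ξ₀ a b)
      (fun κ => P i o' κ) _ (fun ξ => by simp) _ (fun ξ κ => by simp) _ (fun κ => ?_)
    simp only [Finset.mem_filter, Finset.mem_univ, true_and]
    unfold condP
    constructor
    · rintro ⟨u1, u2⟩
      refine ⟨fun W hW => decide_eq_false (u1 W hW), fun a ha b hb => ?_⟩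
      rw [decide_eq_bool_iff]
      exact u2 a ha b hb
    · rintro ⟨u1, u2⟩
      refine ⟨fun W hW => of_decide_eq_false (u1 W hW), fun a ha b hb => ?_⟩
      rw [← decide_eq_bool_iff]
      exact u2 a ha b hb
  rw [h1]
  exact cell_decomp (fun κ => P i o' κ) (fun κ h => hGood i o' κ h) X 𝒳 ξ₀ hξXX

end AuxMain
/-- if the family of distributions `P(o, κ | i)` satisfies the free choice
and closed laboratories assumptions, then the marginal correlation
`P(o | i) = Σ_κ P(o, κ | i)` is a causal correlation, witnessed by the coarse-grained
distribution `P(o, ξ | i) := Σ_{κ : 𝒞_κ = ξ} P(o, κ | i)`: the latter marginalises to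
`P(o | i)`, and for every party `X`, every subset `𝒳 ⊆ Δ \ {X}` and every SPO `ξ₀` on
`{X} ∪ 𝒳`, the probability that no element of `𝒳` lies in the causal future of `X`, that
the causal order on `{X} ∪ 𝒳` is `ξ₀`, and that the parties in `𝒳` display specified
outcomes, does not depend on the value of `i_X`. -/
theorem marginal_correlation_is_causal
    {Δ : Type} [Fintype Δ] [DecidableEq Δ]
    {ISet OSet : Δ → Type}
    [∀ X, Fintype (ISet X)] [∀ X, DecidableEq (ISet X)] [∀ X, Nonempty (ISet X)]
    [∀ X, Fintype (OSet X)] [∀ X, DecidableEq (OSet X)]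
    (P : (∀ X, ISet X) → (∀ X, OSet X) → CRel Δ → ℝ)
    (hPos : ∀ i o κ, 0 ≤ P i o κ)
    (hNorm : ∀ i, (∑ o : ∀ X, OSet X, ∑ κ : CRel Δ, P i o κ) = 1)
    (hSupp : ∀ i o κ, P i o κ ≠ 0 → IsSPO κ)
    (hFC : FreeChoice P)
    (hCL : ClosedLab P) :
    -- (a) the coarse-grained distribution marginalises to `P(o | i)`
    (∀ (i : ∀ X, ISet X) (o : ∀ X, OSet X),
      (∑ ξ : Δ → Δ → Bool,
        ∑ κ ∈ Finset.univ.filter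
            (fun κ : CRel Δ => ∀ Y Z : Δ, (coarse κ Y Z ↔ ξ Y Z = true)),
          P i o κ)
        = ∑ κ : CRel Δ, P i o κ) ∧
    -- (b) it witnesses causality of the marginal correlation
    (∀ (X : Δ) (𝒳 : Finset Δ), X ∉ 𝒳 →
      ∀ ξ₀ : Δ → Δ → Bool,
        ((∀ a ∈ insert X 𝒳, ξ₀ a a = false) ∧
          ∀ a ∈ insert X 𝒳, ∀ b ∈ insert X 𝒳, ∀ c ∈ insert X 𝒳,
            ξ₀ a b = true → ξ₀ b c = true → ξ₀ a c = true) →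
        ∀ (o : ∀ X', OSet X') (i i' : ∀ X', ISet X'),
          (∀ W, W ≠ X → i W = i' W) →
          margCausal P i o X 𝒳 ξ₀ = margCausal P i' o X 𝒳 ξ₀) := by
  have hGood : ∀ i o κ, P i o κ ≠ 0 → GoodK κ := fun i o κ h =>
    ⟨hSupp i o κ h, hCL.1 i o κ (lt_of_le_of_ne (hPos i o κ) (Ne.symm h))⟩
  constructor
  · intro i o
    exact xi_total (fun κ => P i o κ) _ (fun ξ κ => by simp)
  · intro X 𝒳 hX𝒳 ξ₀ hξ₀ o i i' hii
    have hξXX : ξ₀ X X = false := hξ₀.1 X (Finset.mem_insert_self X 𝒳)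
    rw [margCausal_eq P hGood i o X 𝒳 ξ₀ hξXX, margCausal_eq P hGood i' o X 𝒳 ξ₀ hξXX]
    refine Finset.sum_congr rfl fun c hc => ?_
    obtain ⟨h1, h2, h3, h4, h5⟩ := goodCell_props hX𝒳 (Finset.mem_filter.mp hc).2
    exact sum_cell_invariant P hFC X 𝒳 c h1 h2 h3 h4 h5 o i i' hii
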